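/- arXiv:2412.21089 — 2 statements merged into one kernel-verified Lean document; each statement's English description precedes it below -/
import Mathlib

section
/- Let H be a Hopf *-algebra with invertible antipode and B a braided-commutative *-algebra in right H-crossed modules with unitary action and coaction. Then the antilinear map ⋆ on B ⊗ H defined by (b ⊗ h)^⋆ = b*₍₀₎ ◁ S(b*₍₁₎) h*₁ ⊗ h*₂ is involutive: ((b ⊗ h)^⋆)^⋆ = b ⊗ h. -/
open TensorProduct HopfAlgebra Coalgebra
set_option linter.unusedSectionVars false
set_option maxHeartbeats 1000000
set_option synthInstance.maxHeartbeats 400000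

noncomputable section

variable (H : Type) [Ring H] [HopfAlgebra ℂ H] [StarRing H] [StarModule ℂ H]
variable (B : Type) [Ring B] [Algebra ℂ B] [StarRing B] [StarModule ℂ B]
variable (act : B ⊗[ℂ] H →ₗ[ℂ] B) (coact : B →ₗ[ℂ] B ⊗[ℂ] H)

/-- `(a ◁ h₂)₍₀₎ ⊗ h₁ · (a ◁ h₂)₍₁₎` for a right action `act` and right coaction `coact`. -/
def ydLHS (a : B) (h : H) : B ⊗[ℂ] H :=
  (TensorProduct.map (LinearMap.id : B →ₗ[ℂ] B) (LinearMap.mul' ℂ H))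
    ((TensorProduct.assoc ℂ B H H)
      ((TensorProduct.map (TensorProduct.comm ℂ H B).toLinearMap (LinearMap.id : H →ₗ[ℂ] H))
        ((TensorProduct.assoc ℂ H B H).symm
          ((TensorProduct.map (LinearMap.id : H →ₗ[ℂ] H)
              (coact ∘ₗ act ∘ₗ TensorProduct.mk ℂ B H a))
            (Coalgebra.comul (R := ℂ) h)))))

/-- `a₍₀₎ ◁ h₁ ⊗ a₍₁₎ · h₂`. -/
def ydRHS (a : B) (h : H) : B ⊗[ℂ] H :=
  (TensorProduct.map act (LinearMap.mul' ℂ H))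
    ((TensorProduct.tensorTensorTensorComm ℂ B H H H)
      (coact a ⊗ₜ[ℂ] Coalgebra.comul (R := ℂ) h))

/-- `b' ⊗ h' ↦ b'₍₀₎ ◁ (S(b'₍₁₎) h'₁) ⊗ h'₂`, the linear part of the `⋆`-structure. -/
def lStar : B ⊗[ℂ] H →ₗ[ℂ] B ⊗[ℂ] H :=
  (TensorProduct.map
      (act ∘ₗ TensorProduct.map (LinearMap.id : B →ₗ[ℂ] B) (LinearMap.mul' ℂ H))
      (LinearMap.id : H →ₗ[ℂ] H)) ∘ₗ
  (TensorProduct.map (TensorProduct.assoc ℂ B H H).toLinearMap (LinearMap.id : H →ₗ[ℂ] H)) ∘ₗ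
  (TensorProduct.assoc ℂ (B ⊗[ℂ] H) H H).symm.toLinearMap ∘ₗ
  (TensorProduct.map
      (TensorProduct.map (LinearMap.id : B →ₗ[ℂ] B) (HopfAlgebra.antipode (R := ℂ)))
      (LinearMap.id : H ⊗[ℂ] H →ₗ[ℂ] H ⊗[ℂ] H)) ∘ₗ
  (TensorProduct.map coact (Coalgebra.comul (R := ℂ)))



local notation "S" => (antipode (R := ℂ) (A := H))
local notation "ε" => (counit (R := ℂ) (A := H))
local notation "Δ" => (comul (R := ℂ) (A := H))

lemma aux_antipode_one : S (1 : H) = 1 := by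
  have h := mul_antipode_rTensor_comul_apply (R := ℂ) (1 : H)
  simpa [Algebra.TensorProduct.one_def] using h

/-- product of two representations represents the product. -/
def prodRepr {a b : H} {ι κ : Type} (ra : Repr ℂ a ι) (rb : Repr ℂ b κ) : Repr ℂ (a * b) (ι × κ) where
  index := ra.index ×ˢ rb.index
  left p := ra.left p.1 * rb.left p.2
  right p := ra.right p.1 * rb.right p.2
  eq := by
    rw [Bialgebra.comul_mul, ← ra.eq, ← rb.eq, Finset.sum_mul_sum]
    rw [Finset.sum_product]
    simp [Algebra.TensorProduct.tmul_mul_tmul]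

@[simp] lemma prodRepr_index {a b : H} (ra : Repr ℂ a (H × H)) (rb : Repr ℂ b (H × H)) :
    (prodRepr H ra rb).index = ra.index ×ˢ rb.index := rfl

@[simp] lemma prodRepr_left {a b : H} (ra : Repr ℂ a (H × H)) (rb : Repr ℂ b (H × H)) (p) :
    (prodRepr H ra rb).left p = ra.left p.1 * rb.left p.2 := rfl

@[simp] lemma prodRepr_right {a b : H} (ra : Repr ℂ a (H × H)) (rb : Repr ℂ b (H × H)) (p) :
    (prodRepr H ra rb).right p = ra.right p.1 * rb.right p.2 := rfl

lemma counit_right_sum {a : H} (ra : Repr ℂ a (H × H)) :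
    ∑ i ∈ ra.index, ε (ra.right i) • ra.left i = a := by
  have h := sum_tmul_counit_eq (R := ℂ) ra
  calc ∑ i ∈ ra.index, ε (ra.right i) • ra.left i
      = TensorProduct.rid ℂ H (∑ i ∈ ra.index, ra.left i ⊗ₜ[ℂ] ε (ra.right i)) := by
        rw [map_sum]; simp
    _ = TensorProduct.rid ℂ H (a ⊗ₜ[ℂ] 1) := by rw [h]
    _ = a := by simp

lemma counit_left_sum {a : H} (ra : Repr ℂ a (H × H)) :
    ∑ i ∈ ra.index, ε (ra.left i) • ra.right i = a := by
  have h := sum_counit_tmul_eq (R := ℂ) ra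
  calc ∑ i ∈ ra.index, ε (ra.left i) • ra.right i
      = TensorProduct.lid ℂ H (∑ i ∈ ra.index, ε (ra.left i) ⊗ₜ[ℂ] ra.right i) := by
        rw [map_sum]; simp
    _ = TensorProduct.lid ℂ H ((1 : ℂ) ⊗ₜ[ℂ] a) := by rw [h]
    _ = a := by simp

lemma antipode_mul_right_sum {a : H} (ra : Repr ℂ a (H × H)) :
    ∑ i ∈ ra.index, S (ra.left i) * ra.right i = ε a • 1 :=
  sum_antipode_mul_eq_smul ra

lemma sum_antipode_mul_prod {a b : H} (ra : Repr ℂ a (H × H)) (rb : Repr ℂ b (H × H)) :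
    ∑ k ∈ ra.index, ∑ l ∈ rb.index,
      S (ra.left k * rb.left l) * (ra.right k * rb.right l) = (ε a * ε b) • (1 : H) := by
  have hc := sum_antipode_mul_eq_smul (prodRepr H ra rb)
  rw [← Finset.sum_product']
  calc (∑ p ∈ ra.index ×ˢ rb.index,
        S (ra.left p.1 * rb.left p.2) * (ra.right p.1 * rb.right p.2))
      = ε (a * b) • (1 : H) := hc
    _ = (ε a * ε b) • (1 : H) := by rw [Bialgebra.counit_mul]

/-- `z ⊗ z' ↦ S z' * S z` -/
def mulSS : H ⊗[ℂ] H →ₗ[ℂ] H :=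
  LinearMap.mul' ℂ H ∘ₗ TensorProduct.map S S ∘ₗ (TensorProduct.comm ℂ H H).toLinearMap

@[simp] lemma mulSS_tmul (z z' : H) : mulSS H (z ⊗ₜ[ℂ] z') = S z' * S z := by
  simp [mulSS]

/-- six-fold payload for the antipode antimultiplicativity proof -/
def Phi6 : (H ⊗[ℂ] (H ⊗[ℂ] H)) ⊗[ℂ] (H ⊗[ℂ] (H ⊗[ℂ] H)) →ₗ[ℂ] H :=
  LinearMap.mul' ℂ H ∘ₗ
  TensorProduct.map (S ∘ₗ LinearMap.mul' ℂ H)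
    (LinearMap.mul' ℂ H ∘ₗ TensorProduct.map (LinearMap.mul' ℂ H) (mulSS H) ∘ₗ
      (tensorTensorTensorComm ℂ H H H H).toLinearMap) ∘ₗ
  (tensorTensorTensorComm ℂ H (H ⊗[ℂ] H) H (H ⊗[ℂ] H)).toLinearMap

@[simp] lemma Phi6_tmul (x y z x' y' z' : H) :
    Phi6 H ((x ⊗ₜ[ℂ] (y ⊗ₜ[ℂ] z)) ⊗ₜ[ℂ] (x' ⊗ₜ[ℂ] (y' ⊗ₜ[ℂ] z'))) =
      S (x * x') * ((y * y') * (S z' * S z)) := by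
  simp [Phi6, tensorTensorTensorComm_tmul]

lemma aux_antipode_mul (a b : H) : S (a * b) = S b * S a := by
  obtain ⟨ra⟩ : Nonempty (Repr ℂ a (H × H)) := ⟨Repr.arbitrary ℂ a⟩
  obtain ⟨rb⟩ : Nonempty (Repr ℂ b (H × H)) := ⟨Repr.arbitrary ℂ b⟩
  set ra1 : (i : ra.ι) → Repr ℂ (ra.left i) (H × H) := fun i => Repr.arbitrary ℂ (ra.left i) with hra1
  set ra2 : (i : ra.ι) → Repr ℂ (ra.right i) (H × H) := fun i => Repr.arbitrary ℂ (ra.right i) with hra2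
  set rb1 : (j : rb.ι) → Repr ℂ (rb.left j) (H × H) := fun j => Repr.arbitrary ℂ (rb.left j) with hrb1
  set rb2 : (j : rb.ι) → Repr ℂ (rb.right j) (H × H) := fun j => Repr.arbitrary ℂ (rb.right j) with hrb2
  have ha := sum_tmul_tmul_eq (R := ℂ) ra ra1 ra2
  have hb := sum_tmul_tmul_eq (R := ℂ) rb rb1 rb2
  have key : Phi6 H ((∑ i ∈ ra.index, ∑ k ∈ (ra1 i).index,
        (ra1 i).left k ⊗ₜ[ℂ] ((ra1 i).right k ⊗ₜ[ℂ] ra.right i)) ⊗ₜ[ℂ]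
      (∑ j ∈ rb.index, ∑ l ∈ (rb1 j).index,
        (rb1 j).left l ⊗ₜ[ℂ] ((rb1 j).right l ⊗ₜ[ℂ] rb.right j))) =
      Phi6 H ((∑ i ∈ ra.index, ∑ k ∈ (ra2 i).index,
        ra.left i ⊗ₜ[ℂ] ((ra2 i).left k ⊗ₜ[ℂ] (ra2 i).right k)) ⊗ₜ[ℂ]
      (∑ j ∈ rb.index, ∑ l ∈ (rb2 j).index,
        rb.left j ⊗ₜ[ℂ] ((rb2 j).left l ⊗ₜ[ℂ] (rb2 j).right l))) := by
    rw [ha, hb]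
  simp only [sum_tmul, tmul_sum, map_sum, Phi6_tmul] at key
  -- reorder sums on both sides of key
  have key2 :
      (∑ j ∈ rb.index, ∑ i ∈ ra.index, ∑ k ∈ (ra1 i).index, ∑ l ∈ (rb1 j).index,
        S ((ra1 i).left k * (rb1 j).left l) *
          ((ra1 i).right k * (rb1 j).right l * (S (rb.right j) * S (ra.right i)))) =
      (∑ j ∈ rb.index, ∑ i ∈ ra.index, ∑ k ∈ (ra2 i).index, ∑ l ∈ (rb2 j).index,
        S (ra.left i * rb.left j) *
          ((ra2 i).left k * (rb2 j).left l *
            (S ((rb2 j).right l) * S ((ra2 i).right k)))) := by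
    calc (∑ j ∈ rb.index, ∑ i ∈ ra.index, ∑ k ∈ (ra1 i).index, ∑ l ∈ (rb1 j).index,
          S ((ra1 i).left k * (rb1 j).left l) *
            ((ra1 i).right k * (rb1 j).right l * (S (rb.right j) * S (ra.right i))))
        = ∑ j ∈ rb.index, ∑ l ∈ (rb1 j).index, ∑ i ∈ ra.index, ∑ k ∈ (ra1 i).index,
          S ((ra1 i).left k * (rb1 j).left l) *
            ((ra1 i).right k * (rb1 j).right l * (S (rb.right j) * S (ra.right i))) := by
          refine Finset.sum_congr rfl fun j _ => ?_
          refine Eq.trans (Finset.sum_congr rfl fun i _ => Finset.sum_comm) ?_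
          exact Finset.sum_comm
      _ = _ := by
          rw [key]
          refine Finset.sum_congr rfl fun j _ => ?_
          refine Eq.trans Finset.sum_comm ?_
          exact Finset.sum_congr rfl fun i _ => Finset.sum_comm
  -- left side of key2 equals S b * S a
  have way2 : (∑ j ∈ rb.index, ∑ i ∈ ra.index, ∑ k ∈ (ra1 i).index, ∑ l ∈ (rb1 j).index,
        S ((ra1 i).left k * (rb1 j).left l) *
          ((ra1 i).right k * (rb1 j).right l * (S (rb.right j) * S (ra.right i)))) =
      S b * S a := by
    have inner : ∀ j ∈ rb.index, ∀ i ∈ ra.index,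
        (∑ k ∈ (ra1 i).index, ∑ l ∈ (rb1 j).index,
          S ((ra1 i).left k * (rb1 j).left l) *
            ((ra1 i).right k * (rb1 j).right l * (S (rb.right j) * S (ra.right i)))) =
        (ε (ra.left i) * ε (rb.left j)) • (S (rb.right j) * S (ra.right i)) := by
      intro j hj i hi
      have hc := sum_antipode_mul_prod H (ra1 i) (rb1 j)
      calc (∑ k ∈ (ra1 i).index, ∑ l ∈ (rb1 j).index,
            S ((ra1 i).left k * (rb1 j).left l) *
              ((ra1 i).right k * (rb1 j).right l * (S (rb.right j) * S (ra.right i))))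
          = (∑ k ∈ (ra1 i).index, ∑ l ∈ (rb1 j).index,
              S ((ra1 i).left k * (rb1 j).left l) * ((ra1 i).right k * (rb1 j).right l)) *
            (S (rb.right j) * S (ra.right i)) := by
            simp_rw [Finset.sum_mul, mul_assoc]
        _ = (ε (ra.left i) * ε (rb.left j)) • (S (rb.right j) * S (ra.right i)) := by
            rw [hc, smul_mul_assoc, one_mul]
    calc (∑ j ∈ rb.index, ∑ i ∈ ra.index, ∑ k ∈ (ra1 i).index, ∑ l ∈ (rb1 j).index,
          S ((ra1 i).left k * (rb1 j).left l) *
            ((ra1 i).right k * (rb1 j).right l * (S (rb.right j) * S (ra.right i))))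
        = ∑ j ∈ rb.index, ∑ i ∈ ra.index,
            (ε (ra.left i) * ε (rb.left j)) • (S (rb.right j) * S (ra.right i)) :=
          Finset.sum_congr rfl fun j hj => Finset.sum_congr rfl fun i hi => inner j hj i hi
      _ = S b * S a := by
          conv_rhs => rw [← counit_left_sum H ra, ← counit_left_sum H rb]
          simp only [map_sum, map_smul, Finset.sum_mul, Finset.mul_sum, Finset.smul_sum,
            smul_mul_assoc, mul_smul_comm, smul_smul]
          rw [Finset.sum_comm]
  -- right side of key2 equals S (a * b)
  have way1 : (∑ j ∈ rb.index, ∑ i ∈ ra.index, ∑ k ∈ (ra2 i).index, ∑ l ∈ (rb2 j).index,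
        S (ra.left i * rb.left j) *
          ((ra2 i).left k * (rb2 j).left l *
            (S ((rb2 j).right l) * S ((ra2 i).right k)))) =
      S (a * b) := by
    have inner : ∀ j ∈ rb.index, ∀ i ∈ ra.index,
        (∑ k ∈ (ra2 i).index, ∑ l ∈ (rb2 j).index,
          S (ra.left i * rb.left j) *
            ((ra2 i).left k * (rb2 j).left l *
              (S ((rb2 j).right l) * S ((ra2 i).right k)))) =
        (ε (ra.right i) * ε (rb.right j)) • S (ra.left i * rb.left j) := by
      intro j hj i hi
      have hbj := sum_mul_antipode_eq_smul (rb2 j)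
      have hak := sum_mul_antipode_eq_smul (ra2 i)
      calc (∑ k ∈ (ra2 i).index, ∑ l ∈ (rb2 j).index,
            S (ra.left i * rb.left j) *
              ((ra2 i).left k * (rb2 j).left l *
                (S ((rb2 j).right l) * S ((ra2 i).right k))))
          = ∑ k ∈ (ra2 i).index, S (ra.left i * rb.left j) *
              ((ra2 i).left k * ((∑ l ∈ (rb2 j).index,
                (rb2 j).left l * S ((rb2 j).right l)) * S ((ra2 i).right k))) := by
            simp_rw [Finset.sum_mul, Finset.mul_sum, mul_assoc]
        _ = ∑ k ∈ (ra2 i).index, ε (rb.right j) •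
              (S (ra.left i * rb.left j) * ((ra2 i).left k * S ((ra2 i).right k))) := by
            rw [hbj]
            simp only [smul_mul_assoc, one_mul, mul_smul_comm]
        _ = ε (rb.right j) • (S (ra.left i * rb.left j) *
              (∑ k ∈ (ra2 i).index, (ra2 i).left k * S ((ra2 i).right k))) := by
            rw [← Finset.smul_sum, Finset.mul_sum]
        _ = (ε (ra.right i) * ε (rb.right j)) • S (ra.left i * rb.left j) := by
            rw [hak, mul_smul_comm, mul_one, smul_smul, mul_comm (ε (rb.right j))]
    calc (∑ j ∈ rb.index, ∑ i ∈ ra.index, ∑ k ∈ (ra2 i).index, ∑ l ∈ (rb2 j).index,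
          S (ra.left i * rb.left j) *
            ((ra2 i).left k * (rb2 j).left l *
              (S ((rb2 j).right l) * S ((ra2 i).right k))))
        = ∑ j ∈ rb.index, ∑ i ∈ ra.index,
            (ε (ra.right i) * ε (rb.right j)) • S (ra.left i * rb.left j) :=
          Finset.sum_congr rfl fun j hj => Finset.sum_congr rfl fun i hi => inner j hj i hi
      _ = S (a * b) := by
          conv_rhs => rw [← counit_right_sum H ra, ← counit_right_sum H rb]
          simp only [map_sum, map_smul, Finset.sum_mul, Finset.mul_sum, Finset.smul_sum,
            smul_mul_assoc, mul_smul_comm, smul_smul]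
          refine Finset.sum_congr rfl fun j _ => Finset.sum_congr rfl fun i _ => ?_
          rw [mul_comm (ε (ra.right i))]
  rw [way2, way1] at key2
  exact key2.symm



/-! ### Auxiliary lemmas involving the inverse antipode -/

section SinvAux

variable (Sinv : H →ₗ[ℂ] H)

lemma aux_Sinv_mul
    (hSinv₁ : ∀ h : H, Sinv (antipode (R := ℂ) h) = h)
    (hSinv₂ : ∀ h : H, antipode (R := ℂ) (Sinv h) = h) (x y : H) :
    Sinv (x * y) = Sinv y * Sinv x := by
  have hxy : x * y = S (Sinv y * Sinv x) := by
    rw [aux_antipode_mul, hSinv₂, hSinv₂]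
  rw [hxy, hSinv₁]

lemma aux_SS_w
    (hSinv₂ : ∀ h : H, antipode (R := ℂ) (Sinv h) = h) (x y : H) :
    S (S (Sinv (Sinv x) * Sinv y)) = x * S y := by
  rw [aux_antipode_mul, aux_antipode_mul, hSinv₂, hSinv₂, hSinv₂]

lemma aux_star_S_star
    (hSinv₁ : ∀ h : H, Sinv (antipode (R := ℂ) h) = h)
    (hSstar : ∀ h : H, antipode (R := ℂ) (star (antipode (R := ℂ) (star h))) = h) (x : H) :
    star (S (star x)) = Sinv x := by
  have h1 := hSstar x
  calc star (S (star x)) = Sinv (S (star (S (star x)))) := (hSinv₁ _).symm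
    _ = Sinv x := by rw [h1]

end SinvAux

/-! ### The H-side collapse lemma -/

/-- `x ⊗ (y ⊗ z) ↦ (S x * y) ⊗ z` -/
def lam0 : H ⊗[ℂ] (H ⊗[ℂ] H) →ₗ[ℂ] H ⊗[ℂ] H :=
  LinearMap.rTensor H (LinearMap.mul' ℂ H ∘ₗ LinearMap.rTensor H (antipode (R := ℂ))) ∘ₗ
    (TensorProduct.assoc ℂ H H H).symm.toLinearMap

@[simp] lemma lam0_tmul (x y z : H) :
    lam0 H (x ⊗ₜ[ℂ] (y ⊗ₜ[ℂ] z)) = (S x * y) ⊗ₜ[ℂ] z := by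
  simp [lam0]

lemma collapse_one (h : H) (r : Repr ℂ h (H × H)) (r2 : ∀ i : r.ι, Repr ℂ (r.right i) (H × H)) :
    ∑ i ∈ r.index, ∑ j ∈ (r2 i).index,
      (S (r.left i) * (r2 i).left j) ⊗ₜ[ℂ] (r2 i).right j = (1 : H) ⊗ₜ[ℂ] h := by
  set r1 : (i : r.ι) → Repr ℂ (r.left i) (H × H) := fun i => Repr.arbitrary ℂ (r.left i) with hr1
  have hco := sum_tmul_tmul_eq (R := ℂ) r r1 r2
  have hmap := congrArg (lam0 H) hco
  simp only [map_sum, lam0_tmul] at hmap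
  rw [← hmap]
  calc ∑ i ∈ r.index, ∑ j ∈ (r1 i).index,
        (S ((r1 i).left j) * (r1 i).right j) ⊗ₜ[ℂ] r.right i
      = ∑ i ∈ r.index,
          (∑ j ∈ (r1 i).index, S ((r1 i).left j) * (r1 i).right j) ⊗ₜ[ℂ] r.right i := by
        refine Finset.sum_congr rfl fun i _ => ?_
        rw [sum_tmul]
    _ = ∑ i ∈ r.index, (ε (r.left i) • (1 : H)) ⊗ₜ[ℂ] r.right i := by
        refine Finset.sum_congr rfl fun i _ => ?_
        rw [sum_antipode_mul_eq_smul (r1 i)]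
    _ = (1 : H) ⊗ₜ[ℂ] ∑ i ∈ r.index, ε (r.left i) • r.right i := by
        rw [tmul_sum]
        refine Finset.sum_congr rfl fun i _ => ?_
        rw [tmul_smul, smul_tmul']
    _ = (1 : H) ⊗ₜ[ℂ] h := by rw [counit_left_sum]

/-! ### Canonical finite representations of the coaction -/

def cRep (x : B) : Finset (B × H) := (TensorProduct.exists_finset (coact x)).choose

lemma cRep_eq (x : B) :
    coact x = ∑ p ∈ cRep H B coact x, p.1 ⊗ₜ[ℂ] p.2 :=
  (TensorProduct.exists_finset (coact x)).choose_spec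

lemma coact_counit_sum
    (hcounit : ∀ b : B,
      (TensorProduct.rid ℂ B)
        ((TensorProduct.map (LinearMap.id : B →ₗ[ℂ] B) (Coalgebra.counit (R := ℂ)))
          (coact b)) = b) (b : B) :
    ∑ p ∈ cRep H B coact b, ε p.2 • p.1 = b := by
  have hcb := hcounit b
  rw [cRep_eq H B coact b] at hcb
  simpa [map_sum] using hcb

/-- `a ⊗ (x ⊗ y) ↦ a ◁ (S x * y)` -/
def lam1 (act : B ⊗[ℂ] H →ₗ[ℂ] B) : B ⊗[ℂ] (H ⊗[ℂ] H) →ₗ[ℂ] B :=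
  act ∘ₗ LinearMap.lTensor B (LinearMap.mul' ℂ H ∘ₗ LinearMap.rTensor H (antipode (R := ℂ)))

@[simp] lemma lam1_tmul (a : B) (x y : H) :
    lam1 H B act (a ⊗ₜ[ℂ] (x ⊗ₜ[ℂ] y)) = act (a ⊗ₜ[ℂ] (S x * y)) := by
  simp [lam1]

lemma collapse_coact
    (hact_one : ∀ b : B, act (b ⊗ₜ[ℂ] 1) = b)
    (hcoassoc : ∀ b : B,
      (TensorProduct.assoc ℂ B H H)
          ((TensorProduct.map coact (LinearMap.id : H →ₗ[ℂ] H)) (coact b)) =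
        (TensorProduct.map (LinearMap.id : B →ₗ[ℂ] B) (Coalgebra.comul (R := ℂ))) (coact b))
    (hcounit : ∀ b : B,
      (TensorProduct.rid ℂ B)
        ((TensorProduct.map (LinearMap.id : B →ₗ[ℂ] B) (Coalgebra.counit (R := ℂ)))
          (coact b)) = b)
    (b : B) :
    ∑ p ∈ cRep H B coact b, ∑ q ∈ cRep H B coact p.1,
      act (q.1 ⊗ₜ[ℂ] (S q.2 * p.2)) = b := by
  have h := hcoassoc b
  have h' := congrArg (lam1 H B act) h
  have hL : lam1 H B act ((TensorProduct.assoc ℂ B H H)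
        ((TensorProduct.map coact (LinearMap.id : H →ₗ[ℂ] H)) (coact b))) =
      ∑ p ∈ cRep H B coact b, ∑ q ∈ cRep H B coact p.1,
        act (q.1 ⊗ₜ[ℂ] (S q.2 * p.2)) := by
    rw [cRep_eq H B coact b]
    rw [map_sum, map_sum, map_sum]
    refine Finset.sum_congr rfl fun p _ => ?_
    rw [TensorProduct.map_tmul, cRep_eq H B coact p.1, sum_tmul, map_sum, map_sum]
    refine Finset.sum_congr rfl fun q _ => ?_
    simp
  have hR : lam1 H B act ((TensorProduct.map (LinearMap.id : B →ₗ[ℂ] B)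
        (Coalgebra.comul (R := ℂ))) (coact b)) = b := by
    rw [cRep_eq H B coact b, map_sum, map_sum]
    calc ∑ p ∈ cRep H B coact b,
          lam1 H B act ((TensorProduct.map (LinearMap.id : B →ₗ[ℂ] B)
            (Coalgebra.comul (R := ℂ))) (p.1 ⊗ₜ[ℂ] p.2))
        = ∑ p ∈ cRep H B coact b,
            act (p.1 ⊗ₜ[ℂ] (LinearMap.mul' ℂ H
              ((LinearMap.rTensor H (antipode (R := ℂ))) (Δ p.2)))) := by
          refine Finset.sum_congr rfl fun p _ => ?_
          simp [lam1]
      _ = ∑ p ∈ cRep H B coact b, ε p.2 • p.1 := by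
          refine Finset.sum_congr rfl fun p _ => ?_
          rw [mul_antipode_rTensor_comul_apply]
          rw [Algebra.algebraMap_eq_smul_one, tmul_smul, map_smul, hact_one]
      _ = b := coact_counit_sum H B coact hcounit b
  rw [← hL, h', hR]

/-! ### Evaluation of ydLHS / ydRHS -/

lemma twist_eval (a : B) (x : H) (t : B ⊗[ℂ] H) :
    (TensorProduct.map (LinearMap.id : B →ₗ[ℂ] B) (LinearMap.mul' ℂ H))
      ((TensorProduct.assoc ℂ B H H)
        ((TensorProduct.map (TensorProduct.comm ℂ H B).toLinearMap
            (LinearMap.id : H →ₗ[ℂ] H))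
          ((TensorProduct.assoc ℂ H B H).symm (x ⊗ₜ[ℂ] t)))) =
      (LinearMap.lTensor B (LinearMap.mulLeft ℂ x)) t := by
  induction t using TensorProduct.induction_on with
  | zero => simp
  | tmul c d => simp
  | add u v hu hv =>
      rw [tmul_add, map_add, map_add, map_add, map_add, hu, hv]
      exact (map_add _ u v).symm

lemma ydLHS_eval (a : B) (k : H) (rk : Repr ℂ k (H × H)) :
    ydLHS H B act coact a k =
      ∑ m ∈ rk.index, (LinearMap.lTensor B (LinearMap.mulLeft ℂ (rk.left m)))
        (coact (act (a ⊗ₜ[ℂ] rk.right m))) := by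
  unfold ydLHS
  rw [← rk.eq, map_sum, map_sum, map_sum, map_sum, map_sum]
  refine Finset.sum_congr rfl fun m _ => ?_
  rw [TensorProduct.map_tmul]
  simp only [LinearMap.id_coe, id_eq, LinearMap.coe_comp, Function.comp_apply,
    TensorProduct.mk_apply]
  exact twist_eval H B a (rk.left m) _

lemma ydRHS_eval (a : B) (k : H) (rk : Repr ℂ k (H × H)) :
    ydRHS H B act coact a k =
      ∑ p ∈ cRep H B coact a, ∑ m ∈ rk.index,
        act (p.1 ⊗ₜ[ℂ] rk.left m) ⊗ₜ[ℂ] (p.2 * rk.right m) := by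
  unfold ydRHS
  rw [cRep_eq H B coact a, ← rk.eq]
  simp [sum_tmul, tmul_sum, map_sum, tensorTensorTensorComm_tmul]
  exact Finset.sum_comm

/-! ### lTensor-mulLeft helpers -/

lemma lT_mulLeft_comp (x y : H) (t : B ⊗[ℂ] H) :
    LinearMap.lTensor B (LinearMap.mulLeft ℂ x)
      (LinearMap.lTensor B (LinearMap.mulLeft ℂ y) t) =
    LinearMap.lTensor B (LinearMap.mulLeft ℂ (x * y)) t := by
  rw [LinearMap.mulLeft_mul, LinearMap.lTensor_comp, LinearMap.comp_apply]

/-- `x ↦ x ⊗-multiplied on the left of the H-component of t` as a linear map in `x` -/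
def mulLeftT (t : B ⊗[ℂ] H) : H →ₗ[ℂ] B ⊗[ℂ] H where
  toFun x := LinearMap.lTensor B (LinearMap.mulLeft ℂ x) t
  map_add' x y := by
    show LinearMap.lTensor B (LinearMap.mulLeft ℂ (x + y)) t =
      LinearMap.lTensor B (LinearMap.mulLeft ℂ x) t + LinearMap.lTensor B (LinearMap.mulLeft ℂ y) t
    have h : LinearMap.mulLeft ℂ (x + y) = LinearMap.mulLeft ℂ x + LinearMap.mulLeft ℂ y := by
      ext z; simp [add_mul]
    rw [h, LinearMap.lTensor_add, LinearMap.add_apply]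
  map_smul' c x := by
    show LinearMap.lTensor B (LinearMap.mulLeft ℂ (c • x)) t =
      (RingHom.id ℂ) c • LinearMap.lTensor B (LinearMap.mulLeft ℂ x) t
    have h : LinearMap.mulLeft ℂ (c • x) = c • LinearMap.mulLeft ℂ x := by
      ext z; simp [smul_mul_assoc]
    rw [h, LinearMap.lTensor_smul, LinearMap.smul_apply, RingHom.id_apply]

@[simp] lemma mulLeftT_apply (t : B ⊗[ℂ] H) (x : H) :
    mulLeftT H B t x = LinearMap.lTensor B (LinearMap.mulLeft ℂ x) t := rfl

lemma lT_mulLeft_one (t : B ⊗[ℂ] H) :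
    LinearMap.lTensor B (LinearMap.mulLeft ℂ (1 : H)) t = t := by
  rw [LinearMap.mulLeft_one, LinearMap.lTensor_id, LinearMap.id_apply]

/-! ### The coaction-of-an-action formula -/

/-- `x ⊗ (y ⊗ z) ↦ (S x * y) ·⊗ coact (a ◁ z)` -/
def lam2 (a : B) : H ⊗[ℂ] (H ⊗[ℂ] H) →ₗ[ℂ] B ⊗[ℂ] H :=
  LinearMap.lTensor B (LinearMap.mul' ℂ H) ∘ₗ (TensorProduct.leftComm ℂ H B H).toLinearMap ∘ₗ
  TensorProduct.map (LinearMap.mul' ℂ H ∘ₗ LinearMap.rTensor H (antipode (R := ℂ)))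
    (coact ∘ₗ act ∘ₗ TensorProduct.mk ℂ B H a) ∘ₗ
  (TensorProduct.assoc ℂ H H H).symm.toLinearMap

lemma lam2_helper (u : H) (t : B ⊗[ℂ] H) :
    LinearMap.lTensor B (LinearMap.mul' ℂ H)
      ((TensorProduct.leftComm ℂ H B H) (u ⊗ₜ[ℂ] t)) =
    LinearMap.lTensor B (LinearMap.mulLeft ℂ u) t := by
  induction t using TensorProduct.induction_on with
  | zero => simp
  | tmul c d => simp [TensorProduct.leftComm]
  | add s t hs ht => rw [tmul_add, map_add, map_add, map_add, hs, ht]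

lemma lam2_tmul (a : B) (x y z : H) :
    lam2 H B act coact a (x ⊗ₜ[ℂ] (y ⊗ₜ[ℂ] z)) =
      LinearMap.lTensor B (LinearMap.mulLeft ℂ (S x * y)) (coact (act (a ⊗ₜ[ℂ] z))) := by
  unfold lam2
  simp only [LinearMap.coe_comp, Function.comp_apply, LinearEquiv.coe_coe,
    TensorProduct.assoc_symm_tmul, TensorProduct.map_tmul, LinearMap.rTensor_tmul,
    LinearMap.mul'_apply, TensorProduct.mk_apply]
  exact lam2_helper H B (S x * y) _

lemma coact_act_eq
    (hYD : ∀ (a : B) (h : H), ydLHS H B act coact a h = ydRHS H B act coact a h)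
    (a : B) (w : H) (rw : Repr ℂ w (H × H)) (rw2 : ∀ i : rw.ι, Repr ℂ (rw.right i) (H × H)) :
    coact (act (a ⊗ₜ[ℂ] w)) =
      ∑ i ∈ rw.index, ∑ p ∈ cRep H B coact a, ∑ j ∈ (rw2 i).index,
        act (p.1 ⊗ₜ[ℂ] (rw2 i).left j) ⊗ₜ[ℂ]
          (S (rw.left i) * (p.2 * (rw2 i).right j)) := by
  set r1 : (i : rw.ι) → Repr ℂ (rw.left i) (H × H) := fun i => Repr.arbitrary ℂ (rw.left i) with hr1
  have hco := sum_tmul_tmul_eq (R := ℂ) rw r1 rw2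
  have h2 := congrArg (lam2 H B act coact a) hco
  simp only [map_sum, lam2_tmul] at h2
  have hL : ∑ i ∈ rw.index, ∑ j ∈ (r1 i).index,
      LinearMap.lTensor B (LinearMap.mulLeft ℂ (S ((r1 i).left j) * (r1 i).right j))
        (coact (act (a ⊗ₜ[ℂ] rw.right i))) = coact (act (a ⊗ₜ[ℂ] w)) := by
    calc ∑ i ∈ rw.index, ∑ j ∈ (r1 i).index,
          LinearMap.lTensor B (LinearMap.mulLeft ℂ (S ((r1 i).left j) * (r1 i).right j))
            (coact (act (a ⊗ₜ[ℂ] rw.right i)))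
        = ∑ i ∈ rw.index, mulLeftT H B (coact (act (a ⊗ₜ[ℂ] rw.right i)))
            (∑ j ∈ (r1 i).index, S ((r1 i).left j) * (r1 i).right j) := by
          refine Finset.sum_congr rfl fun i _ => ?_
          rw [map_sum]
          rfl
      _ = ∑ i ∈ rw.index, ε (rw.left i) • coact (act (a ⊗ₜ[ℂ] rw.right i)) := by
          refine Finset.sum_congr rfl fun i _ => ?_
          rw [sum_antipode_mul_eq_smul (r1 i), map_smul, mulLeftT_apply, lT_mulLeft_one]
      _ = coact (act (a ⊗ₜ[ℂ] w)) := by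
          conv_rhs => rw [← counit_left_sum H rw]
          rw [tmul_sum, map_sum, map_sum]
          refine Finset.sum_congr rfl fun i _ => ?_
          rw [tmul_smul, map_smul, map_smul]
  have hR : ∑ i ∈ rw.index, ∑ j ∈ (rw2 i).index,
      LinearMap.lTensor B (LinearMap.mulLeft ℂ (S (rw.left i) * (rw2 i).left j))
        (coact (act (a ⊗ₜ[ℂ] (rw2 i).right j))) =
      ∑ i ∈ rw.index, ∑ p ∈ cRep H B coact a, ∑ j ∈ (rw2 i).index,
        act (p.1 ⊗ₜ[ℂ] (rw2 i).left j) ⊗ₜ[ℂ]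
          (S (rw.left i) * (p.2 * (rw2 i).right j)) := by
    refine Finset.sum_congr rfl fun i _ => ?_
    calc ∑ j ∈ (rw2 i).index,
          LinearMap.lTensor B (LinearMap.mulLeft ℂ (S (rw.left i) * (rw2 i).left j))
            (coact (act (a ⊗ₜ[ℂ] (rw2 i).right j)))
        = LinearMap.lTensor B (LinearMap.mulLeft ℂ (S (rw.left i)))
            (∑ j ∈ (rw2 i).index,
              LinearMap.lTensor B (LinearMap.mulLeft ℂ ((rw2 i).left j))
                (coact (act (a ⊗ₜ[ℂ] (rw2 i).right j)))) := by
          rw [map_sum]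
          refine Finset.sum_congr rfl fun j _ => ?_
          rw [lT_mulLeft_comp]
      _ = LinearMap.lTensor B (LinearMap.mulLeft ℂ (S (rw.left i)))
            (ydRHS H B act coact a (rw.right i)) := by
          rw [← ydLHS_eval H B act coact a (rw.right i) (rw2 i), hYD]
      _ = ∑ p ∈ cRep H B coact a, ∑ j ∈ (rw2 i).index,
            act (p.1 ⊗ₜ[ℂ] (rw2 i).left j) ⊗ₜ[ℂ]
              (S (rw.left i) * (p.2 * (rw2 i).right j)) := by
          rw [ydRHS_eval H B act coact a (rw.right i) (rw2 i), map_sum]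
          refine Finset.sum_congr rfl fun p _ => ?_
          rw [map_sum]
          refine Finset.sum_congr rfl fun j _ => ?_
          simp
  rw [← hL, h2, hR]

/-! ### Evaluation of lStar -/

/-- the tail of `lStar` -/
def lamMap : (B ⊗[ℂ] H) ⊗[ℂ] (H ⊗[ℂ] H) →ₗ[ℂ] B ⊗[ℂ] H :=
  (TensorProduct.map
      (act ∘ₗ TensorProduct.map (LinearMap.id : B →ₗ[ℂ] B) (LinearMap.mul' ℂ H))
      (LinearMap.id : H →ₗ[ℂ] H)) ∘ₗ
  (TensorProduct.map (TensorProduct.assoc ℂ B H H).toLinearMap (LinearMap.id : H →ₗ[ℂ] H)) ∘ₗ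
  (TensorProduct.assoc ℂ (B ⊗[ℂ] H) H H).symm.toLinearMap ∘ₗ
  (TensorProduct.map
      (TensorProduct.map (LinearMap.id : B →ₗ[ℂ] B) (HopfAlgebra.antipode (R := ℂ)))
      (LinearMap.id : H ⊗[ℂ] H →ₗ[ℂ] H ⊗[ℂ] H))

@[simp] lemma lamMap_tmul (x : B) (y c d : H) :
    lamMap H B act ((x ⊗ₜ[ℂ] y) ⊗ₜ[ℂ] (c ⊗ₜ[ℂ] d)) =
      act (x ⊗ₜ[ℂ] (S y * c)) ⊗ₜ[ℂ] d := by
  simp [lamMap]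

lemma lStar_apply (c : B) (k : H) :
    lStar H B act coact (c ⊗ₜ[ℂ] k) = lamMap H B act (coact c ⊗ₜ[ℂ] Δ k) := by
  unfold lStar lamMap
  simp only [LinearMap.coe_comp, Function.comp_apply, TensorProduct.map_tmul]

lemma lStar_eval {ι : Type*} (c : B) (k : H) (s : Finset ι) (F : ι → B) (G : ι → H)
    (hc : coact c = ∑ p ∈ s, F p ⊗ₜ[ℂ] G p) (rk : Repr ℂ k (H × H)) :
    lStar H B act coact (c ⊗ₜ[ℂ] k) =
      ∑ p ∈ s, ∑ m ∈ rk.index,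
        act (F p ⊗ₜ[ℂ] (S (G p) * rk.left m)) ⊗ₜ[ℂ] rk.right m := by
  rw [lStar_apply, hc, ← rk.eq]
  rw [sum_tmul, map_sum]
  refine Finset.sum_congr rfl fun p _ => ?_
  rw [tmul_sum, map_sum]
  refine Finset.sum_congr rfl fun m _ => ?_
  rw [lamMap_tmul]

/-! ### The key evaluation of `lStar` on an acted element -/

lemma key_eval
    (hYD : ∀ (a : B) (h : H), ydLHS H B act coact a h = ydRHS H B act coact a h)
    (hact_mul : ∀ (b : B) (g h : H), act (act (b ⊗ₜ[ℂ] g) ⊗ₜ[ℂ] h) = act (b ⊗ₜ[ℂ] (g * h)))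
    (a : B) (w : H) (k : H)
    (rw : Repr ℂ w (H × H)) (rw2 : ∀ i : rw.ι, Repr ℂ (rw.right i) (H × H)) (rk : Repr ℂ k (H × H)) :
    lStar H B act coact (act (a ⊗ₜ[ℂ] w) ⊗ₜ[ℂ] k) =
      ∑ p ∈ cRep H B coact a, ∑ m ∈ rk.index,
        act (p.1 ⊗ₜ[ℂ] (S p.2 * (S (S w) * rk.left m))) ⊗ₜ[ℂ] rk.right m := by
  rw [lStar_apply, coact_act_eq H B act coact hYD a w rw rw2, ← rk.eq]
  rw [sum_tmul, map_sum]
  simp only [sum_tmul, tmul_sum, map_sum, lamMap_tmul]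
  simp only [aux_antipode_mul H, hact_mul, mul_assoc]
  calc ∑ i ∈ rw.index, ∑ m ∈ rk.index, ∑ p ∈ cRep H B coact a, ∑ j ∈ (rw2 i).index,
        act (p.1 ⊗ₜ[ℂ] ((rw2 i).left j * (S ((rw2 i).right j) *
          (S p.2 * (S (S (rw.left i)) * rk.left m))))) ⊗ₜ[ℂ] rk.right m
      = ∑ i ∈ rw.index, ∑ m ∈ rk.index, ∑ p ∈ cRep H B coact a,
          ε (rw.right i) • (act (p.1 ⊗ₜ[ℂ]
            (S p.2 * (S (S (rw.left i)) * rk.left m))) ⊗ₜ[ℂ] rk.right m) := by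
        refine Finset.sum_congr rfl fun i _ => Finset.sum_congr rfl fun m _ =>
          Finset.sum_congr rfl fun p _ => ?_
        have hsum := sum_mul_antipode_eq_smul (rw2 i)
        calc ∑ j ∈ (rw2 i).index,
              act (p.1 ⊗ₜ[ℂ] ((rw2 i).left j * (S ((rw2 i).right j) *
                (S p.2 * (S (S (rw.left i)) * rk.left m))))) ⊗ₜ[ℂ] rk.right m
            = act (p.1 ⊗ₜ[ℂ] ((∑ j ∈ (rw2 i).index,
                (rw2 i).left j * S ((rw2 i).right j)) *
                (S p.2 * (S (S (rw.left i)) * rk.left m)))) ⊗ₜ[ℂ] rk.right m := by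
              rw [Finset.sum_mul, tmul_sum, map_sum, sum_tmul]
              exact Finset.sum_congr rfl fun j _ => by rw [mul_assoc]
          _ = act (p.1 ⊗ₜ[ℂ] ((ε (rw.right i) • (1 : H)) *
                (S p.2 * (S (S (rw.left i)) * rk.left m)))) ⊗ₜ[ℂ] rk.right m := by
              rw [hsum]
          _ = ε (rw.right i) • (act (p.1 ⊗ₜ[ℂ]
                (S p.2 * (S (S (rw.left i)) * rk.left m))) ⊗ₜ[ℂ] rk.right m) := by
              rw [smul_mul_assoc, one_mul, tmul_smul, map_smul, smul_tmul']
    _ = ∑ m ∈ rk.index, ∑ p ∈ cRep H B coact a, ∑ i ∈ rw.index,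
          ε (rw.right i) • (act (p.1 ⊗ₜ[ℂ]
            (S p.2 * (S (S (rw.left i)) * rk.left m))) ⊗ₜ[ℂ] rk.right m) := by
        rw [Finset.sum_comm]
        exact Finset.sum_congr rfl fun m _ => Finset.sum_comm
    _ = ∑ m ∈ rk.index, ∑ p ∈ cRep H B coact a,
          act (p.1 ⊗ₜ[ℂ] (S p.2 * (S (S w) * rk.left m))) ⊗ₜ[ℂ] rk.right m := by
        have hssw : ∑ i ∈ rw.index, ε (rw.right i) • S (S (rw.left i)) = S (S w) := by
          have h0 := counit_right_sum H rw
          have h1 := congrArg (fun x => S (S x)) h0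
          simpa [map_sum, map_smul] using h1
        refine Finset.sum_congr rfl fun m _ => Finset.sum_congr rfl fun p _ => ?_
        calc ∑ i ∈ rw.index, ε (rw.right i) • (act (p.1 ⊗ₜ[ℂ]
              (S p.2 * (S (S (rw.left i)) * rk.left m))) ⊗ₜ[ℂ] rk.right m)
            = act (p.1 ⊗ₜ[ℂ] (S p.2 * ((∑ i ∈ rw.index,
                ε (rw.right i) • S (S (rw.left i))) * rk.left m))) ⊗ₜ[ℂ] rk.right m := by
              rw [Finset.sum_mul, Finset.mul_sum, tmul_sum, map_sum, sum_tmul]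
              refine Finset.sum_congr rfl fun i _ => ?_
              rw [smul_mul_assoc, mul_smul_comm, tmul_smul, map_smul, smul_tmul']
          _ = act (p.1 ⊗ₜ[ℂ] (S p.2 * (S (S w) * rk.left m))) ⊗ₜ[ℂ] rk.right m := by
              rw [hssw]
    _ = ∑ p ∈ cRep H B coact a, ∑ m ∈ rk.index,
          act (p.1 ⊗ₜ[ℂ] (S p.2 * (S (S w) * rk.left m))) ⊗ₜ[ℂ] rk.right m :=
        Finset.sum_comm


/-- `x ⊗ y ↦ (c ◁ (u * x)) ⊗ y` -/
def lam3 (c : B) (u : H) : H ⊗[ℂ] H →ₗ[ℂ] B ⊗[ℂ] H :=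
  LinearMap.rTensor H (act ∘ₗ TensorProduct.mk ℂ B H c ∘ₗ LinearMap.mulLeft ℂ u)

@[simp] lemma lam3_tmul (c : B) (u x y : H) :
    lam3 H B act c u (x ⊗ₜ[ℂ] y) = act (c ⊗ₜ[ℂ] (u * x)) ⊗ₜ[ℂ] y := by
  simp [lam3]

lemma addhom_sum {M N : Type*} [AddCommGroup M] [AddCommGroup N] (f : M → N)
    (hadd : ∀ u v, f (u + v) = f u + f v) {ι : Type*} (s : Finset ι) (g : ι → M) :
    f (∑ i ∈ s, g i) = ∑ i ∈ s, f (g i) :=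
  map_sum (AddMonoidHom.mk' f hadd) g s

/-- Let `H` be a Hopf `*`-algebra with invertible antipode and `B` a
braided-commutative `*`-algebra in right `H`-crossed modules with unitary action and
coaction.  The antilinear map `⋆` on `B ⊗ H` defined by
`(b ⊗ h)^⋆ = b*₍₀₎ ◁ (S(b*₍₁₎) h*₁) ⊗ h*₂` is involutive. -/
theorem smash_star_involutive (Sinv : H →ₗ[ℂ] H)
    (hSinv₁ : ∀ h : H, Sinv (HopfAlgebra.antipode (R := ℂ) h) = h)
    (hSinv₂ : ∀ h : H, HopfAlgebra.antipode (R := ℂ) (Sinv h) = h)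
    (sHH : H ⊗[ℂ] H → H ⊗[ℂ] H)
    (hsHH_add : ∀ u v : H ⊗[ℂ] H, sHH (u + v) = sHH u + sHH v)
    (hsHH_smul : ∀ (c : ℂ) (u : H ⊗[ℂ] H), sHH (c • u) = (starRingEnd ℂ c) • sHH u)
    (hsHH_tmul : ∀ x y : H, sHH (x ⊗ₜ[ℂ] y) = star x ⊗ₜ[ℂ] star y)
    (hcomul_star : ∀ h : H, Coalgebra.comul (R := ℂ) (star h) = sHH (Coalgebra.comul (R := ℂ) h))
    (hcounit_star : ∀ h : H, Coalgebra.counit (R := ℂ) (star h) = star (Coalgebra.counit (R := ℂ) h))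
    (hSstar : ∀ h : H,
      HopfAlgebra.antipode (R := ℂ) (star (HopfAlgebra.antipode (R := ℂ) (star h))) = h)
    (hact_one : ∀ b : B, act (b ⊗ₜ[ℂ] 1) = b)
    (hact_mul : ∀ (b : B) (g h : H), act (act (b ⊗ₜ[ℂ] g) ⊗ₜ[ℂ] h) = act (b ⊗ₜ[ℂ] (g * h)))
    (hcoassoc : ∀ b : B,
      (TensorProduct.assoc ℂ B H H)
          ((TensorProduct.map coact (LinearMap.id : H →ₗ[ℂ] H)) (coact b)) =
        (TensorProduct.map (LinearMap.id : B →ₗ[ℂ] B) (Coalgebra.comul (R := ℂ))) (coact b))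
    (hcounit : ∀ b : B,
      (TensorProduct.rid ℂ B)
        ((TensorProduct.map (LinearMap.id : B →ₗ[ℂ] B) (Coalgebra.counit (R := ℂ)))
          (coact b)) = b)
    (hact_alg : ∀ (a b : B) (h : H),
      act ((a * b) ⊗ₜ[ℂ] h) =
        LinearMap.mul' ℂ B
          ((TensorProduct.map (act ∘ₗ TensorProduct.mk ℂ B H a)
              (act ∘ₗ TensorProduct.mk ℂ B H b)) (Coalgebra.comul (R := ℂ) h)))
    (hcoact_alg : ∀ a b : B, coact (a * b) = coact a * coact b)
    (hcoact_one : coact 1 = 1)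
    (hYD : ∀ (a : B) (h : H), ydLHS H B act coact a h = ydRHS H B act coact a h)
    (hbc : ∀ a b : B,
      LinearMap.mul' ℂ B
        ((TensorProduct.map (LinearMap.id : B →ₗ[ℂ] B) (act ∘ₗ TensorProduct.mk ℂ B H a))
          (coact b)) = a * b)
    (sBH : B ⊗[ℂ] H → B ⊗[ℂ] H)
    (hsBH_add : ∀ u v : B ⊗[ℂ] H, sBH (u + v) = sBH u + sBH v)
    (hsBH_smul : ∀ (c : ℂ) (u : B ⊗[ℂ] H), sBH (c • u) = (starRingEnd ℂ c) • sBH u)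
    (hsBH_tmul : ∀ (b : B) (h : H), sBH (b ⊗ₜ[ℂ] h) = star b ⊗ₜ[ℂ] star h)
    (hact_star : ∀ (b : B) (h : H),
      star (act (b ⊗ₜ[ℂ] h)) = act (star b ⊗ₜ[ℂ] Sinv (star h)))
    (hcoact_star : ∀ b : B, coact (star b) = sBH (coact b))
    :
    ∀ (b : B) (h : H),
      lStar H B act coact (sBH (lStar H B act coact (sBH (b ⊗ₜ[ℂ] h)))) = b ⊗ₜ[ℂ] h := by
  intro b h
  set rh : Repr ℂ h (H × H) := Repr.arbitrary ℂ h with hrh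
  set rh2 : (m : rh.ι) → Repr ℂ (rh.right m) (H × H) := fun m => Repr.arbitrary ℂ (rh.right m) with hrh2
  -- a representation of `comul (star h)`
  have hΔs : Coalgebra.comul (R := ℂ) (star h) =
      ∑ m ∈ rh.index, star (rh.left m) ⊗ₜ[ℂ] star (rh.right m) := by
    rw [hcomul_star, ← rh.eq, addhom_sum sHH hsHH_add]
    exact Finset.sum_congr rfl fun m _ => hsHH_tmul _ _
  have hcs : coact (star b) = ∑ p ∈ cRep H B coact b, star p.1 ⊗ₜ[ℂ] star p.2 := by
    rw [hcoact_star, cRep_eq H B coact b, addhom_sum sBH hsBH_add]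
    exact Finset.sum_congr rfl fun p _ => hsBH_tmul _ _
  let rhs : Repr ℂ (star h) (H × H) :=
    { index := rh.index, left := fun m => star (rh.left m),
      right := fun m => star (rh.right m), eq := hΔs.symm }
  have step2 : lStar H B act coact (star b ⊗ₜ[ℂ] star h) =
      ∑ p ∈ cRep H B coact b, ∑ m ∈ rh.index,
        act (star p.1 ⊗ₜ[ℂ] (S (star p.2) * star (rh.left m))) ⊗ₜ[ℂ]
          star (rh.right m) :=
    lStar_eval H B act coact (star b) (star h) (cRep H B coact b)
      (fun p => star p.1) (fun p => star p.2) hcs rhs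
  have step3 : sBH (∑ p ∈ cRep H B coact b, ∑ m ∈ rh.index,
      act (star p.1 ⊗ₜ[ℂ] (S (star p.2) * star (rh.left m))) ⊗ₜ[ℂ]
        star (rh.right m)) =
      ∑ p ∈ cRep H B coact b, ∑ m ∈ rh.index,
        act (p.1 ⊗ₜ[ℂ] (Sinv (Sinv p.2) * Sinv (rh.left m))) ⊗ₜ[ℂ] rh.right m := by
    rw [addhom_sum sBH hsBH_add]
    refine Finset.sum_congr rfl fun p _ => ?_
    rw [addhom_sum sBH hsBH_add]
    refine Finset.sum_congr rfl fun m _ => ?_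
    rw [hsBH_tmul, star_star]
    congr 1
    rw [hact_star, star_star, star_mul, star_star,
      aux_star_S_star H Sinv hSinv₁ hSstar,
      aux_Sinv_mul H Sinv hSinv₁ hSinv₂]
  calc lStar H B act coact (sBH (lStar H B act coact (sBH (b ⊗ₜ[ℂ] h))))
      = lStar H B act coact (sBH (lStar H B act coact (star b ⊗ₜ[ℂ] star h))) := by
        rw [hsBH_tmul]
    _ = lStar H B act coact (∑ p ∈ cRep H B coact b, ∑ m ∈ rh.index,
          act (p.1 ⊗ₜ[ℂ] (Sinv (Sinv p.2) * Sinv (rh.left m))) ⊗ₜ[ℂ] rh.right m) := by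
        rw [step2, step3]
    _ = ∑ p ∈ cRep H B coact b, ∑ m ∈ rh.index,
          lStar H B act coact
            (act (p.1 ⊗ₜ[ℂ] (Sinv (Sinv p.2) * Sinv (rh.left m))) ⊗ₜ[ℂ] rh.right m) := by
        rw [map_sum]
        exact Finset.sum_congr rfl fun p _ => by rw [map_sum]
    _ = ∑ p ∈ cRep H B coact b, ∑ m ∈ rh.index, ∑ q ∈ cRep H B coact p.1,
          ∑ n ∈ (rh2 m).index,
          act (q.1 ⊗ₜ[ℂ] (S q.2 * ((p.2 * S (rh.left m)) * (rh2 m).left n))) ⊗ₜ[ℂ]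
            (rh2 m).right n := by
        refine Finset.sum_congr rfl fun p _ => Finset.sum_congr rfl fun m _ => ?_
        rw [key_eval H B act coact hYD hact_mul p.1
          (Sinv (Sinv p.2) * Sinv (rh.left m)) (rh.right m)
          (Repr.arbitrary ℂ _) (fun i => Repr.arbitrary ℂ _) (rh2 m)]
        refine Finset.sum_congr rfl fun q _ => Finset.sum_congr rfl fun n _ => ?_
        rw [aux_SS_w H Sinv hSinv₂]
    _ = ∑ p ∈ cRep H B coact b, ∑ q ∈ cRep H B coact p.1, ∑ m ∈ rh.index,
          ∑ n ∈ (rh2 m).index,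
          act (q.1 ⊗ₜ[ℂ] (S q.2 * ((p.2 * S (rh.left m)) * (rh2 m).left n))) ⊗ₜ[ℂ]
            (rh2 m).right n :=
        Finset.sum_congr rfl fun p _ => Finset.sum_comm
    _ = ∑ p ∈ cRep H B coact b, ∑ q ∈ cRep H B coact p.1,
          act (q.1 ⊗ₜ[ℂ] (S q.2 * p.2)) ⊗ₜ[ℂ] h := by
        refine Finset.sum_congr rfl fun p _ => Finset.sum_congr rfl fun q _ => ?_
        have hcol := congrArg (lam3 H B act q.1 (S q.2 * p.2)) (collapse_one H h rh rh2)
        simp only [map_sum, lam3_tmul] at hcol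
        calc ∑ m ∈ rh.index, ∑ n ∈ (rh2 m).index,
              act (q.1 ⊗ₜ[ℂ] (S q.2 * ((p.2 * S (rh.left m)) * (rh2 m).left n))) ⊗ₜ[ℂ]
                (rh2 m).right n
            = ∑ m ∈ rh.index, ∑ n ∈ (rh2 m).index,
              act (q.1 ⊗ₜ[ℂ] ((S q.2 * p.2) * (S (rh.left m) * (rh2 m).left n))) ⊗ₜ[ℂ]
                (rh2 m).right n := by
              refine Finset.sum_congr rfl fun m _ => Finset.sum_congr rfl fun n _ => ?_
              simp only [mul_assoc]
          _ = act (q.1 ⊗ₜ[ℂ] ((S q.2 * p.2) * 1)) ⊗ₜ[ℂ] h := hcol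
          _ = act (q.1 ⊗ₜ[ℂ] (S q.2 * p.2)) ⊗ₜ[ℂ] h := by rw [mul_one]
    _ = (∑ p ∈ cRep H B coact b, ∑ q ∈ cRep H B coact p.1,
          act (q.1 ⊗ₜ[ℂ] (S q.2 * p.2))) ⊗ₜ[ℂ] h := by
        rw [sum_tmul]
        exact Finset.sum_congr rfl fun p _ => by rw [sum_tmul]
    _ = b ⊗ₜ[ℂ] h := by
        rw [collapse_coact H B act coact hact_one hcoassoc hcounit b]
end
end

section
/- With A a *-algebra and Ω¹ a right and left fgp *-bimodule as above, and ⊛: 𝔛^R → 𝔛^L defined by ev^R(ω, x^⊛) = (ev^L(x, ω*))*, the coevaluations are related by star: ω_i* ⊗ x_i^⊛ = coev^R(1), i.e. applying star to the first leg and ⊛ to the second leg of the left coevaluation yields the right coevaluation. -/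
open TensorProduct

noncomputable section

variable (A : Type) [Ring A] [Algebra ℂ A] [StarRing A] [StarModule ℂ A]
variable (Ω : Type) [AddCommGroup Ω] [Module ℂ Ω]
variable (l : A → Ω → Ω) (r : Ω → A → Ω) (sΩ : Ω → Ω)

/-- The map `⊛ : 𝔛^R → 𝔛^L`, `x^⊛(ω) = (x(ω*))*`. -/
def bstar (x : Ω → A) : Ω → A := fun ω => star (x (sΩ ω))

/-- The relations defining the balanced tensor product `𝔛^L ⊗_A Ω¹` as a quotient of the
tensor product over `ℂ`, where the right action on maps `y : Ω¹ → A` is `(y a)(ω) = y(ω) a`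
and the left action on `Ω¹` is `l`. -/
def relT : Submodule ℂ ((Ω → A) ⊗[ℂ] Ω) :=
  Submodule.span ℂ
    {z | ∃ (g : Ω → A) (a : A) (ω : Ω),
      z = (fun ν => g ν * a) ⊗ₜ[ℂ] ω - g ⊗ₜ[ℂ] (l a ω)}

/-- With `A` a `*`-algebra, `Ω¹` a right and left f.g.p. `*`-bimodule
with left coevaluation `coev^L(1) = ω_i ⊗ x_i` and right coevaluation
`coev^R(1) = y_j ⊗ η_j`, and `⊛` defined by `ev^R(ω, x^⊛) = (ev^L(x, ω*))*`, the
coevaluations are related by star:  applying `*` to the first leg and `⊛` to the second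
leg of the left coevaluation yields the right coevaluation, i.e.
`x_i^⊛ ⊗ ω_i* = y_j ⊗ η_j` in `𝔛^L ⊗_A Ω¹`. -/
theorem coev_star_eq_coevR
    -- Ω is an A-bimodule
    (hl_lin : ∀ a : A, IsLinearMap ℂ (l a))
    (hr_lin : ∀ a : A, IsLinearMap ℂ (fun ω => r ω a))
    (hl_one : ∀ ω, l 1 ω = ω) (hr_one : ∀ ω, r ω 1 = ω)
    (hl_mul : ∀ a b ω, l (a * b) ω = l a (l b ω))
    (hr_mul : ∀ a b ω, r (r ω a) b = r ω (a * b))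
    (hl_addA : ∀ a b ω, l (a + b) ω = l a ω + l b ω)
    (hr_addA : ∀ a b ω, r ω (a + b) = r ω a + r ω b)
    (hl_smulA : ∀ (c : ℂ) a ω, l (c • a) ω = c • l a ω)
    (hr_smulA : ∀ (c : ℂ) a ω, r ω (c • a) = c • r ω a)
    (hlr : ∀ a b ω, l a (r ω b) = r (l a ω) b)
    -- the star structure on Ω
    (hs_add : ∀ ω η, sΩ (ω + η) = sΩ ω + sΩ η)
    (hs_smul : ∀ (c : ℂ) ω, sΩ (c • ω) = (starRingEnd ℂ c) • sΩ ω)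
    (hs_invol : ∀ ω, sΩ (sΩ ω) = ω)
    (hs_l : ∀ a ω, sΩ (l a ω) = r (sΩ ω) (star a))
    (hs_r : ∀ a ω, sΩ (r ω a) = l (star a) (sΩ ω))
    -- the f.g.p. data
    (ι κ : Type) [Fintype ι] [Fintype κ]
    (ωb : ι → Ω) (xb : ι → Ω → A) (yb : κ → Ω → A) (ηb : κ → Ω)
    (hxb_lin : ∀ i, IsLinearMap ℂ (xb i))
    (hxb_mod : ∀ i ω a, xb i (r ω a) = xb i ω * a)
    (hsnakeL₁ : ∀ ω : Ω, (∑ i, r (ωb i) (xb i ω)) = ω)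
    (hsnakeL₂ : ∀ x : Ω → A, IsLinearMap ℂ x → (∀ ω a, x (r ω a) = x ω * a) →
      ∀ ω, x ω = ∑ i, x (ωb i) * xb i ω)
    (hyb_lin : ∀ j, IsLinearMap ℂ (yb j))
    (hyb_mod : ∀ j a ω, yb j (l a ω) = a * yb j ω)
    (hsnakeR₁ : ∀ ω : Ω, (∑ j, l (yb j ω) (ηb j)) = ω)
    (hsnakeR₂ : ∀ y : Ω → A, IsLinearMap ℂ y → (∀ a ω, y (l a ω) = a * y ω) →
      ∀ ω, y ω = ∑ j, yb j ω * y (ηb j)) :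
    (relT A Ω l).mkQ (∑ i, (bstar A Ω sΩ (xb i)) ⊗ₜ[ℂ] sΩ (ωb i)) =
      (relT A Ω l).mkQ (∑ j, (yb j) ⊗ₜ[ℂ] ηb j) := by

  have key : ∀ (g : Ω → A) (a : A) (ω : Ω),
      (relT A Ω l).mkQ ((fun ν => g ν * a) ⊗ₜ[ℂ] ω) = (relT A Ω l).mkQ (g ⊗ₜ[ℂ] l a ω) := by
    intro g a ω
    rw [Submodule.mkQ_apply, Submodule.mkQ_apply, Submodule.Quotient.eq]
    exact Submodule.subset_span ⟨g, a, ω, rfl⟩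
  have alg : ∀ (j : κ) (ν : Ω),
      yb j ν = ∑ i, star (xb i (sΩ ν)) * yb j (sΩ (ωb i)) := by
    intro j ν
    have hx : IsLinearMap ℂ (fun ω => star (yb j (sΩ ω))) := by
      constructor
      · intro u v; simp only [hs_add, (hyb_lin j).map_add, star_add]
      · intro c u
        simp only [hs_smul, (hyb_lin j).map_smul, star_smul, starRingEnd_apply]
        simp
    have hmod : ∀ ω a, star (yb j (sΩ (r ω a))) = star (yb j (sΩ ω)) * a := by
      intro ω a
      rw [hs_r, hyb_mod, star_mul, star_star]
    have h := hsnakeL₂ _ hx hmod (sΩ ν)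
    simp only [hs_invol] at h
    have h2 := congrArg star h
    rw [star_star, star_sum] at h2
    simpa [star_mul, star_star] using h2
  have step1 : ∀ i, (relT A Ω l).mkQ ((bstar A Ω sΩ (xb i)) ⊗ₜ[ℂ] sΩ (ωb i))
      = ∑ j, (relT A Ω l).mkQ
          ((fun ν => bstar A Ω sΩ (xb i) ν * yb j (sΩ (ωb i))) ⊗ₜ[ℂ] ηb j) := by
    intro i
    conv_lhs => rw [← hsnakeR₁ (sΩ (ωb i))]
    rw [tmul_sum, map_sum]
    exact Finset.sum_congr rfl fun j _ => (key _ _ _).symm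
  rw [map_sum, map_sum]
  calc ∑ i, (relT A Ω l).mkQ ((bstar A Ω sΩ (xb i)) ⊗ₜ[ℂ] sΩ (ωb i))
      = ∑ i, ∑ j, (relT A Ω l).mkQ
          ((fun ν => bstar A Ω sΩ (xb i) ν * yb j (sΩ (ωb i))) ⊗ₜ[ℂ] ηb j) :=
        Finset.sum_congr rfl fun i _ => step1 i
    _ = ∑ j, ∑ i, (relT A Ω l).mkQ
          ((fun ν => bstar A Ω sΩ (xb i) ν * yb j (sΩ (ωb i))) ⊗ₜ[ℂ] ηb j) :=
        Finset.sum_comm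
    _ = ∑ j, (relT A Ω l).mkQ ((yb j) ⊗ₜ[ℂ] ηb j) := by
        refine Finset.sum_congr rfl fun j _ => ?_
        rw [← map_sum, ← sum_tmul]
        congr 1
        congr 1
        funext ν
        rw [Finset.sum_apply]
        exact (alg j ν).symm
end
end
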